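/- Let R be a prism over a flat polygon P. If P is locally Rupert, then R is locally reverse Rupert. -/

import Mathlib

open Matrix

/-- Rotation by angle `θ` about the unit axis `a` (Rodrigues' formula). -/
noncomputable def rot3 (a : Fin 3 → ℝ) (θ : ℝ) (x : Fin 3 → ℝ) : Fin 3 → ℝ :=
  Real.cos θ • x + Real.sin θ • (crossProduct a x) + ((1 - Real.cos θ) * (a ⬝ᵥ x)) • a

/-- Orthogonal projection onto the xy-plane, viewed as a map to `ℝ²`. -/
def proj2 (x : Fin 3 → ℝ) : Fin 2 → ℝ := ![x 0, x 1]

/-- Orthogonal projection `(x,y,z) ↦ (x,y,0)` of `ℝ³` onto the xy-plane. -/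
def proj3 (x : Fin 3 → ℝ) : Fin 3 → ℝ := ![x 0, x 1, 0]

/-- `X ⊆ ℝ³` is locally Rupert: Rupert rotations of arbitrarily small angle exist. -/
noncomputable def IsLocallyRupert (X : Set (Fin 3 → ℝ)) : Prop :=
  ∀ ε > 0, ∃ (a : Fin 3 → ℝ) (θ : ℝ), a ⬝ᵥ a = 1 ∧ |θ| < ε ∧
    proj2 '' (rot3 a θ '' X) ⊆ interior (proj2 '' X)

/-- `X ⊆ ℝ³` is locally reverse Rupert. -/
noncomputable def IsLocallyReverseRupert (X : Set (Fin 3 → ℝ)) : Prop :=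
  ∀ ε > 0, ∃ (a : Fin 3 → ℝ) (θ : ℝ), a ⬝ᵥ a = 1 ∧ |θ| < ε ∧
    proj2 '' X ⊆ interior (proj2 '' (rot3 a θ '' X))

lemma rot3_inv (a : Fin 3 → ℝ) (θ : ℝ) (haa : a ⬝ᵥ a = 1) (x : Fin 3 → ℝ) :
    rot3 a θ (rot3 a (-θ) x) = x := by
  have h1 := Real.sin_sq_add_cos_sq θ
  simp only [dotProduct, Fin.sum_univ_three] at haa
  funext i
  fin_cases i <;>
  [ (simp [rot3, crossProduct, dotProduct, Fin.sum_univ_three, Matrix.vecHead, Matrix.vecTail];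
     linear_combination h1 * (x 0 - (a 0 * x 0 + a 1 * x 1 + a 2 * x 2) * a 0)
       + (Real.sin θ^2 * x 0 + (1 - Real.cos θ)^2 * (a 0 * x 0 + a 1 * x 1 + a 2 * x 2) * a 0) * haa);
    (simp [rot3, crossProduct, dotProduct, Fin.sum_univ_three, Matrix.vecHead, Matrix.vecTail];
     linear_combination h1 * (x 1 - (a 0 * x 0 + a 1 * x 1 + a 2 * x 2) * a 1)
       + (Real.sin θ^2 * x 1 + (1 - Real.cos θ)^2 * (a 0 * x 0 + a 1 * x 1 + a 2 * x 2) * a 1) * haa);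
    (simp [rot3, crossProduct, dotProduct, Fin.sum_univ_three, Matrix.vecHead, Matrix.vecTail];
     linear_combination h1 * (x 2 - (a 0 * x 0 + a 1 * x 1 + a 2 * x 2) * a 2)
       + (Real.sin θ^2 * x 2 + (1 - Real.cos θ)^2 * (a 0 * x 0 + a 1 * x 1 + a 2 * x 2) * a 2) * haa)]

lemma abs_one_sub_cos_le_abs (θ : ℝ) : |1 - Real.cos θ| ≤ |θ| := by
  have hc : Real.cos θ = 1 - 2 * Real.sin (θ/2)^2 := by
    have h := Real.cos_two_mul (θ/2)
    have h2 := Real.sin_sq_add_cos_sq (θ/2)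
    rw [show 2*(θ/2) = θ by ring] at h
    linarith
  have hs := Real.abs_sin_le_abs (x := θ/2)
  have hs1 : |Real.sin (θ/2)| ≤ 1 :=
    abs_le.2 ⟨Real.neg_one_le_sin _, Real.sin_le_one _⟩
  have h3 : |θ/2| = |θ|/2 := by rw [abs_div]; norm_num
  rw [abs_of_nonneg (by nlinarith [Real.cos_le_one θ] : (0:ℝ) ≤ 1 - Real.cos θ), hc]
  nlinarith [mul_le_mul hs hs1 (abs_nonneg _) (abs_nonneg _), sq_abs (Real.sin (θ/2))]

lemma rot3_apply_two (a : Fin 3 → ℝ) (θ : ℝ) (x : Fin 3 → ℝ) (hx2 : x 2 = 0) :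
    (rot3 a θ x) 2 = Real.sin θ * (a 0 * x 1 - a 1 * x 0)
      + (1 - Real.cos θ) * ((a 0 * x 0 + a 1 * x 1) * a 2) := by
  simp [rot3, crossProduct, dotProduct, Fin.sum_univ_three, Matrix.vecHead, Matrix.vecTail, hx2]
  ring

/-- if `P` is a locally Rupert flat polygon, then the prism `R` over
`P` is locally reverse Rupert. -/
theorem prism_over_locally_rupert (V : Finset (Fin 3 → ℝ))
    (P R : Set (Fin 3 → ℝ)) (h : ℝ) (hh : 0 < h)
    -- P is a flat (convex) polygon in the xy-plane:
    (hVflat : ∀ x ∈ V, x 2 = 0)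
    (hP : P = convexHull ℝ (V : Set (Fin 3 → ℝ)))
    -- R is the prism over P of height h:
    (hR : R = {x : Fin 3 → ℝ | proj3 x ∈ P ∧ -h ≤ x 2 ∧ x 2 ≤ h})
    (hPr : IsLocallyRupert P) :
    IsLocallyReverseRupert R := by
  -- flatness of P
  have hflat : ∀ x ∈ P, x 2 = 0 := by
    rw [hP]
    intro x hx
    have hconv : Convex ℝ {y : Fin 3 → ℝ | y 2 = 0} := by
      intro u hu v hv s t _ _ _
      simp only [Set.mem_setOf_eq] at *
      simp [hu, hv]
    exact convexHull_min hVflat hconv hx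
  -- P ⊆ R
  have hPsubR : P ⊆ R := by
    intro x hx
    have hx2 := hflat x hx
    have hx3 : proj3 x = x := by
      funext i; fin_cases i <;> simp [proj3, hx2]
    rw [hR]
    exact ⟨by rw [hx3]; exact hx, by rw [hx2]; constructor <;> linarith⟩
  -- proj2 '' R = proj2 '' P
  have hprojR : proj2 '' R = proj2 '' P := by
    apply Set.Subset.antisymm
    · rintro _ ⟨y, hy, rfl⟩
      rw [hR] at hy
      exact ⟨proj3 y, hy.1, by funext i; fin_cases i <;> simp [proj2, proj3]⟩
    · exact Set.image_mono hPsubR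
  -- bound on P
  obtain ⟨M, hM⟩ := Bornology.IsBounded.exists_norm_le
    (((V.finite_toSet).isCompact_convexHull (𝕜 := ℝ)).isBounded)
  set M' : ℝ := |M| + 1 with hM'def
  have hM'pos : (0:ℝ) < M' := by positivity
  have hMle : ∀ x ∈ P, ∀ i, |x i| ≤ M' := by
    intro x hx i
    rw [hP] at hx
    calc |x i| ≤ ‖x‖ := by rw [← Real.norm_eq_abs]; exact norm_le_pi_norm x i
    _ ≤ M := hM x hx
    _ ≤ M' := by rw [hM'def]; calc M ≤ |M| := le_abs_self M
                 _ ≤ |M| + 1 := by linarith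
  intro ε hε
  set δ : ℝ := min ε (h / (4 * M' + 4)) with hδdef
  have hδpos : 0 < δ := lt_min hε (by positivity)
  obtain ⟨a, θ, haa, hθ, hsub⟩ := hPr δ hδpos
  have hθε : |θ| < ε := hθ.trans_le (min_le_left _ _)
  have hθh : |θ| < h / (4 * M' + 4) := hθ.trans_le (min_le_right _ _)
  have ha : ∀ i, |a i| ≤ 1 := by
    have h0 : a 0 ^ 2 + a 1 ^ 2 + a 2 ^ 2 = 1 := by
      have h' := haa
      simp only [dotProduct, Fin.sum_univ_three] at h'
      nlinarith [h']
    intro i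
    rw [← sq_le_one_iff_abs_le_one]
    fin_cases i
    · show a 0 ^ 2 ≤ 1
      nlinarith [sq_nonneg (a 1), sq_nonneg (a 2)]
    · show a 1 ^ 2 ≤ 1
      nlinarith [sq_nonneg (a 0), sq_nonneg (a 2)]
    · show a 2 ^ 2 ≤ 1
      nlinarith [sq_nonneg (a 0), sq_nonneg (a 1)]
  refine ⟨a, -θ, haa, by simpa using hθε, ?_⟩
  rw [hprojR]
  -- the auxiliary open set S
  set F : (Fin 2 → ℝ) → (Fin 3 → ℝ) := fun q => rot3 a θ ![q 0, q 1, 0] with hFdef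
  have hFcont : Continuous F := by
    apply continuous_pi
    intro i
    fin_cases i <;>
    · simp [hFdef, rot3, crossProduct, dotProduct, Fin.sum_univ_three, Matrix.vecHead,
        Matrix.vecTail]
      fun_prop
  have hp2cont : Continuous proj2 := by
    apply continuous_pi
    intro i
    fin_cases i <;> · simp [proj2]; fun_prop
  set S : Set (Fin 2 → ℝ) :=
    ((proj2 ∘ F) ⁻¹' interior (proj2 '' P)) ∩ ((fun q => F q 2) ⁻¹' Set.Ioo (-h) h) with hSdef
  have hSopen : IsOpen S :=
    (isOpen_interior.preimage (hp2cont.comp hFcont)).inter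
      (isOpen_Ioo.preimage ((continuous_apply 2).comp hFcont))
  -- K ⊆ S
  have hKS : proj2 '' P ⊆ S := by
    rintro _ ⟨x, hx, rfl⟩
    have hx2 := hflat x hx
    have hlift : ![proj2 x 0, proj2 x 1, 0] = x := by
      funext i; fin_cases i <;> simp [proj2, hx2]
    constructor
    · show proj2 (F (proj2 x)) ∈ interior (proj2 '' P)
      rw [hFdef]
      simp only
      rw [hlift]
      exact hsub ⟨rot3 a θ x, ⟨x, hx, rfl⟩, rfl⟩
    · show F (proj2 x) 2 ∈ Set.Ioo (-h) h
      rw [hFdef]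
      simp only
      rw [hlift]
      rw [Set.mem_Ioo, ← abs_lt]
      rw [rot3_apply_two a θ x hx2]
      have hs := Real.abs_sin_le_abs (x := θ)
      have hcb := abs_one_sub_cos_le_abs θ
      have hA : |a 0 * x 1 - a 1 * x 0| ≤ 2 * M' := by
        calc |a 0 * x 1 - a 1 * x 0| ≤ |a 0 * x 1| + |a 1 * x 0| := abs_sub _ _
        _ ≤ 2 * M' := by
            rw [abs_mul, abs_mul]
            nlinarith [ha 0, ha 1, hMle x hx 0, hMle x hx 1, abs_nonneg (x 0), abs_nonneg (x 1),
              abs_nonneg (a 0), abs_nonneg (a 1)]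
      have hB : |(a 0 * x 0 + a 1 * x 1) * a 2| ≤ 2 * M' := by
        calc |(a 0 * x 0 + a 1 * x 1) * a 2| ≤ |a 0 * x 0 + a 1 * x 1| * |a 2| := by
              rw [abs_mul]
        _ ≤ (|a 0 * x 0| + |a 1 * x 1|) * 1 := by
              apply mul_le_mul (abs_add_le _ _) (ha 2) (abs_nonneg _) (by positivity)
        _ ≤ 2 * M' := by
              rw [abs_mul, abs_mul]
              nlinarith [ha 0, ha 1, hMle x hx 0, hMle x hx 1, abs_nonneg (x 0), abs_nonneg (x 1),
                abs_nonneg (a 0), abs_nonneg (a 1)]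
      calc |Real.sin θ * (a 0 * x 1 - a 1 * x 0)
            + (1 - Real.cos θ) * ((a 0 * x 0 + a 1 * x 1) * a 2)|
          ≤ |Real.sin θ| * |a 0 * x 1 - a 1 * x 0|
            + |1 - Real.cos θ| * |(a 0 * x 0 + a 1 * x 1) * a 2| := by
            refine (abs_add_le _ _).trans ?_
            rw [abs_mul, abs_mul]
        _ ≤ |θ| * (2 * M') + |θ| * (2 * M') := by
            gcongr
        _ = |θ| * (4 * M') := by ring
        _ < (h / (4 * M' + 4)) * (4 * M') := mul_lt_mul_of_pos_right hθh (by positivity)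
        _ < h := by
            rw [div_mul_eq_mul_div, div_lt_iff₀ (by positivity)]
            nlinarith [hh, hM'pos]
  -- S ⊆ proj2 '' (rot3 a (-θ) '' R)
  have hSsub : S ⊆ proj2 '' (rot3 a (-θ) '' R) := by
    rintro q ⟨hq1, hq2⟩
    set x : Fin 3 → ℝ := ![q 0, q 1, 0] with hxdef
    have hx2 : x 2 = 0 := by simp [hxdef]
    have hxR : rot3 a θ x ∈ R := by
      rw [hR]
      refine ⟨?_, ?_, ?_⟩
      · -- proj3 (rot3 a θ x) ∈ P
        have hmem : proj2 (rot3 a θ x) ∈ proj2 '' P := interior_subset hq1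
        obtain ⟨y, hyP, hy⟩ := hmem
        have hy2 := hflat y hyP
        have : proj3 (rot3 a θ x) = y := by
          funext i
          fin_cases i
          · have := congrFun hy 0; simpa [proj2, proj3] using this.symm
          · have := congrFun hy 1; simpa [proj2, proj3] using this.symm
          · simp [proj3, hy2]
        rw [this]; exact hyP
      · exact (hq2.1).le
      · exact (hq2.2).le
    have hinv : rot3 a (-θ) (rot3 a θ x) = x := by
      have := rot3_inv a (-θ) haa x
      rwa [neg_neg] at this
    refine ⟨x, ⟨rot3 a θ x, hxR, hinv⟩, ?_⟩
    funext i; fin_cases i <;> simp [proj2, hxdef]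
  exact fun p hp => interior_maximal hSsub hSopen (hKS hp)
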